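/- Let T>0, p∈(1,∞), α∈(1/p,1), m∈ℕ, u₀∈ℝ^m, and let G:[0,T]×ℝ^m→ℝ^m be a Carathéodory function satisfying ‖G(t,x)‖ ≤ γ(t) + C‖x‖^{q/p} for some γ∈L^p(0,T), C≥0, q∈[1,∞), and which is locally Lipschitz in the second variable uniformly in t: there exist r>0 and L≥0 such that ‖G(t,x)−G(t,y)‖ ≤ L‖x−y‖ for all x,y in the closed ball of radius r around u₀ and a.e. t. Then there exists τ∈(0,T) and a unique continuous φ:[0,τ]→ℝ^m satisfying φ(t) = u₀ + (1/Γ(α))∫₀^t (t−s)^{α−1} G(s,φ(s)) ds for all t∈[0,τ]. -/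

import Mathlib

open MeasureTheory Set intervalIntegral
open scoped NNReal ENNReal Topology


/-- subadditivity of rpow for exponent ≤ 1 -/
lemma my_rpow_add_le {x y e : ℝ} (hx : 0 ≤ x) (hy : 0 ≤ y) (he : 0 ≤ e) (he1 : e ≤ 1) :
    (x + y) ^ e ≤ x ^ e + y ^ e := by
  have h := NNReal.rpow_add_le_add_rpow (x.toNNReal) (y.toNNReal) he he1
  have hxy : ((x.toNNReal + y.toNNReal : ℝ≥0) : ℝ) = x + y := by
    simp [Real.coe_toNNReal _ hx, Real.coe_toNNReal _ hy]
  calc (x + y) ^ e = ((x.toNNReal + y.toNNReal : ℝ≥0) : ℝ) ^ e := by rw [hxy]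
    _ = (((x.toNNReal + y.toNNReal) ^ e : ℝ≥0) : ℝ) := by rw [NNReal.coe_rpow]
    _ ≤ ((x.toNNReal ^ e + y.toNNReal ^ e : ℝ≥0) : ℝ) := by exact_mod_cast h
    _ = x ^ e + y ^ e := by
        simp [NNReal.coe_rpow, Real.coe_toNNReal _ hx, Real.coe_toNNReal _ hy]

/-- superadditivity of rpow for exponent ≥ 1, in difference form -/
lemma my_sub_rpow_le {x y e : ℝ} (hy : 0 ≤ y) (hxy : y ≤ x) (he : 1 ≤ e) :
    (x - y) ^ e ≤ x ^ e - y ^ e := by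
  have hx : 0 ≤ x := hy.trans hxy
  have h := NNReal.add_rpow_le_rpow_add ((x - y).toNNReal) (y.toNNReal) he
  have hxy' : ((x - y).toNNReal + y.toNNReal : ℝ≥0) = x.toNNReal := by
    ext
    simp [Real.coe_toNNReal _ (sub_nonneg.2 hxy), Real.coe_toNNReal _ hy, Real.coe_toNNReal _ hx]
  rw [hxy'] at h
  have h' : ((x - y).toNNReal ^ e + y.toNNReal ^ e : ℝ≥0) ≤ x.toNNReal ^ e := h
  have := (NNReal.coe_le_coe.2 h')
  push_cast [NNReal.coe_rpow, Real.coe_toNNReal _ (sub_nonneg.2 hxy),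
    Real.coe_toNNReal _ hy, Real.coe_toNNReal _ hx] at this
  linarith

/-- value of the kernel integral -/
lemma my_integral_kernel {t c a b : ℝ} (hc : (-1:ℝ) < c) :
    ∫ s in a..b, (t - s) ^ c = ((t - a) ^ (c + 1) - (t - b) ^ (c + 1)) / (c + 1) := by
  have h := intervalIntegral.integral_comp_sub_left (a := a) (b := b) (fun x => x ^ c) t
  rw [h, integral_rpow (Or.inl hc)]

lemma my_intervalIntegrable_kernel {t c a b : ℝ} (hc : (-1:ℝ) < c) :
    IntervalIntegrable (fun s => (t - s) ^ c) volume a b := by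
  have h := (intervalIntegral.intervalIntegrable_rpow' (a := t - a) (b := t - b) hc).comp_sub_left t
  simpa using h

/-- continuity from a Hölder-type modulus -/
lemma my_continuousOn_of_rpow_mod {E : Type*} [PseudoMetricSpace E] {f : ℝ → E} {s : Set ℝ}
    {c e : ℝ} (he : 0 < e)
    (h : ∀ x ∈ s, ∀ y ∈ s, x ≤ y → dist (f x) (f y) ≤ c * (y - x) ^ e) :
    ContinuousOn f s := by
  have key : ∀ x ∈ s, ∀ y ∈ s, dist (f x) (f y) ≤ (max c 0) * |y - x| ^ e := by
    intro x hx y hy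
    rcases le_total x y with hxy | hxy
    · calc dist (f x) (f y) ≤ c * (y - x) ^ e := h x hx y hy hxy
        _ ≤ (max c 0) * |y - x| ^ e := by
            rw [abs_of_nonneg (by linarith)]
            exact mul_le_mul_of_nonneg_right (le_max_left _ _)
              (Real.rpow_nonneg (by linarith) _)
    · calc dist (f x) (f y) = dist (f y) (f x) := dist_comm _ _
        _ ≤ c * (x - y) ^ e := h y hy x hx hxy
        _ ≤ (max c 0) * |y - x| ^ e := by
            rw [abs_sub_comm, abs_of_nonneg (by linarith)]
            exact mul_le_mul_of_nonneg_right (le_max_left _ _)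
              (Real.rpow_nonneg (by linarith) _)
  rw [Metric.continuousOn_iff]
  intro x hx ε hε
  set c' := max c 0 with hc'
  have hc'0 : 0 ≤ c' := le_max_right _ _
  refine ⟨(ε / (c' + 1)) ^ e⁻¹, Real.rpow_pos_of_pos (by positivity) _, fun y hy hdist => ?_⟩
  have hδe : ((ε / (c' + 1)) ^ e⁻¹) ^ e = ε / (c' + 1) :=
    Real.rpow_inv_rpow (by positivity) he.ne'
  have h1 : dist y x ^ e < ε / (c' + 1) := by
    rw [← hδe]
    exact Real.rpow_lt_rpow dist_nonneg hdist he
  have h2 : c' * dist y x ^ e ≤ c' * (ε / (c' + 1)) :=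
    mul_le_mul_of_nonneg_left h1.le hc'0
  have h3 : c' * (ε / (c' + 1)) < ε := by
    rw [mul_div_assoc'] ; rw [div_lt_iff₀ (by positivity)] ; nlinarith
  calc dist (f y) (f x) = dist (f x) (f y) := dist_comm _ _
    _ ≤ c' * |y - x| ^ e := key x hx y hy
    _ = c' * dist y x ^ e := by rw [Real.dist_eq, abs_sub_comm]
    _ < ε := lt_of_le_of_lt h2 h3

lemma my_memLp_of_integrable {f : ℝ → ℝ} {e : ℝ} {μ : Measure ℝ} (he : 0 < e)
    (hf : AEStronglyMeasurable f μ) (hi : Integrable (fun s => ‖f s‖ ^ e) μ) :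
    MemLp f (ENNReal.ofReal e) μ := by
  have h0 : (ENNReal.ofReal e) ≠ 0 := by simp [he, he.not_ge]
  have ht : (ENNReal.ofReal e) ≠ ∞ := ENNReal.ofReal_ne_top
  rw [← memLp_norm_rpow_iff hf h0 ht]
  simp only [ENNReal.toReal_ofReal he.le, ENNReal.div_self h0 ht]
  rw [memLp_one_iff_integrable]
  exact hi

lemma my_holder {μ : Measure ℝ} {E : Type*} [NormedAddCommGroup E] [NormedSpace ℝ E]
    {k g : ℝ → ℝ} {F : ℝ → E} {p p' : ℝ} (hpq : p.HolderConjugate p')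
    (hk : MemLp k (ENNReal.ofReal p') μ) (hgp : MemLp g (ENNReal.ofReal p) μ)
    (hF : AEStronglyMeasurable F μ) (hFg : ∀ᵐ s ∂μ, ‖F s‖ ≤ g s) :
    Integrable (fun s => k s • F s) μ ∧
    ‖∫ s, k s • F s ∂μ‖ ≤
      (∫ s, ‖k s‖ ^ p' ∂μ) ^ (1/p') * (∫ s, ‖g s‖ ^ p ∂μ) ^ (1/p) := by
  have hFg' : ∀ᵐ s ∂μ, ‖F s‖ ≤ ‖g s‖ := by
    filter_upwards [hFg] with s h; exact h.trans (le_abs_self _)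
  have hFmem : MemLp F (ENNReal.ofReal p) μ := hgp.of_le hF hFg'
  have hone : (1 : ℝ≥0∞) / 1 = 1 / ENNReal.ofReal p' + 1 / ENNReal.ofReal p := by
    simp only [one_div]
    rw [inv_one, hpq.symm.inv_add_inv_ennreal]
  have hint : Integrable (fun s => k s • F s) μ := by
    have h := (haveI : ENNReal.HolderTriple (ENNReal.ofReal p') (ENNReal.ofReal p) 1 :=
      ⟨by simpa only [one_div, inv_one] using hone.symm⟩; hFmem.smul (r := 1) hk)
    rw [memLp_one_iff_integrable] at h
    exact h
  refine ⟨hint, ?_⟩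
  have hprod : Integrable (fun s => ‖k s‖ * ‖g s‖) μ := by
    have h := (haveI : ENNReal.HolderTriple (ENNReal.ofReal p') (ENNReal.ofReal p) 1 :=
      ⟨by simpa only [one_div, inv_one] using hone.symm⟩; hgp.norm.smul (r := 1) hk.norm)
    rw [memLp_one_iff_integrable] at h
    exact h
  calc ‖∫ s, k s • F s ∂μ‖ ≤ ∫ s, ‖k s • F s‖ ∂μ := norm_integral_le_integral_norm _
    _ = ∫ s, ‖k s‖ * ‖F s‖ ∂μ := by simp [norm_smul]
    _ ≤ ∫ s, ‖k s‖ * ‖g s‖ ∂μ := by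
        refine integral_mono_of_nonneg ?_ hprod ?_
        · exact Filter.Eventually.of_forall fun s => by positivity
        · filter_upwards [hFg'] with s h
          exact mul_le_mul_of_nonneg_left h (norm_nonneg _)
    _ ≤ _ := integral_mul_norm_le_Lp_mul_Lq hpq.symm hk hgp

lemma my_superposition {m : ℕ} {G' : ℝ → EuclideanSpace ℝ (Fin m) → EuclideanSpace ℝ (Fin m)}
    (hc : ∀ t, Continuous (G' t)) (hm : ∀ x, Measurable fun t => G' t x)
    {ψ : ℝ → EuclideanSpace ℝ (Fin m)} (hψ : Measurable ψ) :
    Measurable fun s => G' s (ψ s) := by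
  have hH := measurable_uncurry_of_continuous_of_measurable
    (u := fun (x : EuclideanSpace ℝ (Fin m)) (t : ℝ) => G' t x) hc hm
  exact hH.comp (hψ.prodMk measurable_id)

lemma my_kernel_meas {t αr : ℝ} : Measurable (fun s : ℝ => (t - s) ^ (αr - 1)) :=
  (measurable_const.sub measurable_id).pow_const _

lemma my_kernel_facts {p' αr a b t : ℝ} (hp' : 0 < p') (hαr : (-1:ℝ) < (αr-1)*p')
    (hα1 : αr ≤ 1) (hab : a ≤ b) (hbt : b ≤ t) :
    MemLp (fun s => (t-s)^(αr-1)) (ENNReal.ofReal p') (volume.restrict (Ioc a b)) ∧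
    (∫ s in Ioc a b, ‖(t-s)^(αr-1)‖ ^ p') ≤ (b-a)^((αr-1)*p'+1) / ((αr-1)*p'+1) := by
  set c := (αr-1)*p' with hc
  set β := c + 1 with hβ
  have hβ0 : 0 < β := by simp only [hβ]; linarith
  have hβ1 : β ≤ 1 := by
    have : c ≤ 0 := mul_nonpos_of_nonpos_of_nonneg (by linarith) hp'.le
    simp only [hβ]; linarith
  have hmeas : AEStronglyMeasurable (fun s : ℝ => (t-s)^(αr-1))
      (volume.restrict (Ioc a b)) := my_kernel_meas.aestronglyMeasurable
  have hcongr : ∀ s ∈ Ioc a b, (t-s)^c = ‖(t-s)^(αr-1)‖ ^ p' := by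
    intro s hs
    have h0 : (0:ℝ) ≤ t - s := by linarith [hs.2]
    rw [Real.norm_eq_abs, abs_of_nonneg (Real.rpow_nonneg h0 _), ← Real.rpow_mul h0]
  have h1 : IntegrableOn (fun s => (t-s)^c) (Ioc a b) := by
    rw [← intervalIntegrable_iff_integrableOn_Ioc_of_le hab]
    exact my_intervalIntegrable_kernel hαr
  have hInt : IntegrableOn (fun s => ‖(t-s)^(αr-1)‖ ^ p') (Ioc a b) := by
    refine h1.congr ?_
    exact (ae_restrict_iff' measurableSet_Ioc).mpr (Filter.Eventually.of_forall hcongr)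
  constructor
  · exact my_memLp_of_integrable hp' hmeas hInt
  · have heq : (∫ s in Ioc a b, ‖(t-s)^(αr-1)‖ ^ p') = ∫ s in Ioc a b, (t-s)^c :=
      (setIntegral_congr_fun measurableSet_Ioc (fun s hs => (hcongr s hs).symm))
    rw [heq, ← intervalIntegral.integral_of_le hab, my_integral_kernel hαr]
    have hba : (0:ℝ) ≤ b - a := by linarith
    have htb : (0:ℝ) ≤ t - b := by linarith
    have key : (t-a)^β ≤ (t-b)^β + (b-a)^β := by
      have h := my_rpow_add_le htb hba hβ0.le hβ1
      have hta : t - a = (t-b) + (b-a) := by ring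
      rw [hta]; exact h
    exact (div_le_div_iff_of_pos_right hβ0).mpr (by linarith)

lemma my_kernel_diff_facts {p' αr t t' : ℝ} (hp' : 1 ≤ p') (hαr : (-1:ℝ) < (αr-1)*p')
    (hα1 : αr ≤ 1) (h0t : 0 ≤ t) (htt' : t ≤ t') :
    (∫ s in Ioc 0 t, ‖(t-s)^(αr-1) - (t'-s)^(αr-1)‖ ^ p')
      ≤ (t'-t)^((αr-1)*p'+1) / ((αr-1)*p'+1) := by
  set c := (αr-1)*p' with hc
  set β := c + 1 with hβ
  have hp'0 : (0:ℝ) < p' := lt_of_lt_of_le one_pos hp'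
  have hβ0 : 0 < β := by simp only [hβ]; linarith
  have hgi : Integrable (fun s => (t-s)^c - (t'-s)^c) (volume.restrict (Ioc 0 t)) := by
    have h1 : IntegrableOn (fun s => (t-s)^c) (Ioc 0 t) := by
      rw [← intervalIntegrable_iff_integrableOn_Ioc_of_le h0t]
      exact my_intervalIntegrable_kernel hαr
    have h2 : IntegrableOn (fun s => (t'-s)^c) (Ioc 0 t) := by
      rw [← intervalIntegrable_iff_integrableOn_Ioc_of_le h0t]
      exact my_intervalIntegrable_kernel hαr
    exact h1.sub h2
  have hae : ∀ᵐ s ∂(volume.restrict (Ioc 0 t)), s ≠ t := by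
    rw [ae_iff]
    simp only [ne_eq, not_not, setOf_eq_eq_singleton]
    rw [Measure.restrict_apply (measurableSet_singleton t)]
    exact measure_mono_null inter_subset_left Real.volume_singleton
  have hbound : ∀ᵐ s ∂(volume.restrict (Ioc 0 t)),
      ‖(t-s)^(αr-1) - (t'-s)^(αr-1)‖ ^ p' ≤ (t-s)^c - (t'-s)^c := by
    have hmem : ∀ᵐ s ∂(volume.restrict (Ioc 0 t)), s ∈ Ioc 0 t :=
      ae_restrict_mem measurableSet_Ioc
    filter_upwards [hmem, hae] with s hs hsne
    have hst : 0 < t - s := lt_of_le_of_ne (by linarith [hs.2]) (by intro h; apply hsne; linarith)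
    have hst' : 0 < t' - s := by linarith
    have hyx : (t'-s)^(αr-1) ≤ (t-s)^(αr-1) :=
      Real.rpow_le_rpow_of_nonpos hst (by linarith) (by linarith)
    have hy0 : (0:ℝ) ≤ (t'-s)^(αr-1) := Real.rpow_nonneg hst'.le _
    rw [Real.norm_eq_abs, abs_of_nonneg (by linarith)]
    calc ((t-s)^(αr-1) - (t'-s)^(αr-1)) ^ p'
        ≤ ((t-s)^(αr-1))^p' - ((t'-s)^(αr-1))^p' := my_sub_rpow_le hy0 hyx hp'
      _ = (t-s)^c - (t'-s)^c := by
          rw [← Real.rpow_mul hst.le, ← Real.rpow_mul hst'.le]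
  have hle := integral_mono_of_nonneg
    (Filter.Eventually.of_forall (fun s => by positivity)) hgi hbound
  refine hle.trans ?_
  rw [integral_sub ((intervalIntegrable_iff_integrableOn_Ioc_of_le h0t).mp
        (my_intervalIntegrable_kernel hαr))
      ((intervalIntegrable_iff_integrableOn_Ioc_of_le h0t).mp
        (my_intervalIntegrable_kernel hαr))]
  rw [← intervalIntegral.integral_of_le h0t, ← intervalIntegral.integral_of_le h0t,
    my_integral_kernel hαr, my_integral_kernel hαr]
  have h1 : (t - 0) ^ β ≤ (t' - 0) ^ β := Real.rpow_le_rpow (by linarith) (by linarith) hβ0.le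
  have h2 : (t - t) ^ β = 0 := by rw [sub_self]; exact Real.zero_rpow hβ0.ne'
  rw [div_sub_div_same]
  exact (div_le_div_iff_of_pos_right hβ0).mpr (by linarith)

set_option maxHeartbeats 1000000 in
theorem stmt_13 (T p α : ℝ) (hT : 0 < T) (hp : 1 < p) (hαp : 1 / p < α) (hα1 : α < 1)
    (m : ℕ) (u₀ : EuclideanSpace ℝ (Fin m))
    (G : ℝ → EuclideanSpace ℝ (Fin m) → EuclideanSpace ℝ (Fin m))
    (hGmeas : ∀ x, Measurable (fun t => G t x))
    (hGcont : ∀ᵐ t ∂(volume.restrict (Set.Icc 0 T)), Continuous (fun x => G t x))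
    (γ : ℝ → ℝ)
    (hγ : MeasureTheory.MemLp γ (ENNReal.ofReal p) (volume.restrict (Set.Icc 0 T)))
    (C q : ℝ) (hC : 0 ≤ C) (hq : 1 ≤ q)
    (hgrowth : ∀ x, ∀ᵐ t ∂(volume.restrict (Set.Icc 0 T)),
      ‖G t x‖ ≤ γ t + C * ‖x‖ ^ (q / p))
    (r L : ℝ) (hr : 0 < r) (hL : 0 ≤ L)
    (hlip : ∀ᵐ t ∂(volume.restrict (Set.Icc 0 T)),
      ∀ x ∈ Metric.closedBall u₀ r, ∀ y ∈ Metric.closedBall u₀ r,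
        ‖G t x - G t y‖ ≤ L * ‖x - y‖) :
    ∃ τ : ℝ, 0 < τ ∧ τ < T ∧
      (∃ φ : ℝ → EuclideanSpace ℝ (Fin m),
        ContinuousOn φ (Set.Icc 0 τ) ∧
        ∀ t ∈ Set.Icc (0:ℝ) τ,
          φ t = u₀ + (Real.Gamma α)⁻¹ •
            ∫ s in (0:ℝ)..t, ((t - s) ^ (α - 1)) • G s (φ s)) ∧
      (∀ φ ψ : ℝ → EuclideanSpace ℝ (Fin m),
        (ContinuousOn φ (Set.Icc 0 τ) ∧
          ∀ t ∈ Set.Icc (0:ℝ) τ,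
            φ t = u₀ + (Real.Gamma α)⁻¹ •
              ∫ s in (0:ℝ)..t, ((t - s) ^ (α - 1)) • G s (φ s)) →
        (ContinuousOn ψ (Set.Icc 0 τ) ∧
          ∀ t ∈ Set.Icc (0:ℝ) τ,
            ψ t = u₀ + (Real.Gamma α)⁻¹ •
              ∫ s in (0:ℝ)..t, ((t - s) ^ (α - 1)) • G s (ψ s)) →
        Set.EqOn φ ψ (Set.Icc 0 τ)) := by
  classical
  have hp0 : (0:ℝ) < p := lt_trans one_pos hp
  have hα0 : (0:ℝ) < α := lt_trans (by positivity) hαp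
  have hαm1 : (-1:ℝ) < α - 1 := by linarith
  have hΓ : 0 < Real.Gamma α := Real.Gamma_pos_of_pos hα0
  have hΓi : (0:ℝ) ≤ (Real.Gamma α)⁻¹ := by positivity
  set p' := p / (p - 1) with hp'def
  have hpq : p.HolderConjugate p' := Real.HolderConjugate.conjExponent hp
  have hp'1 : 1 < p' := hpq.symm.lt
  have hp'0 : (0:ℝ) < p' := by linarith
  have hinv : 1/p + 1/p' = 1 := by
    have := hpq.inv_add_inv_eq_one; rw [one_div, one_div]; linarith
  have hc : (-1:ℝ) < (α - 1) * p' := by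
    have h3 : -(1/p') < α - 1 := by
      have : 1/p - 1 = -(1/p') := by linarith
      linarith
    have h4 := mul_lt_mul_of_pos_right h3 hp'0
    have h5 : -(1/p') * p' = -1 := by field_simp
    linarith
  set β := (α-1)*p' + 1 with hβdef
  have hβ0 : 0 < β := by simp only [hβdef]; linarith
  -- package the a.e. hypotheses into a measurable null set
  have hae := hGcont.and ((hgrowth u₀).and hlip)
  have hnull := ae_iff.mp hae
  obtain ⟨N, hNsub, hNmeas, hNnull⟩ := exists_measurable_superset_of_null hnull
  have hNgood : ∀ t ∉ N, Continuous (fun x => G t x) ∧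
      (‖G t u₀‖ ≤ γ t + C * ‖u₀‖ ^ (q/p)) ∧
      (∀ x ∈ Metric.closedBall u₀ r, ∀ y ∈ Metric.closedBall u₀ r,
        ‖G t x - G t y‖ ≤ L * ‖x - y‖) := by
    intro t ht
    by_contra hcon
    exact ht (hNsub hcon)
  set G' : ℝ → EuclideanSpace ℝ (Fin m) → EuclideanSpace ℝ (Fin m) :=
    fun t x => if t ∈ N then 0 else G t x with hG'def
  have hG'cont : ∀ t, Continuous (G' t) := by
    intro t
    by_cases ht : t ∈ N
    · simp only [hG'def, if_pos ht]; exact continuous_const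
    · simp only [hG'def, if_neg ht]; exact (hNgood t ht).1
  have hG'meas : ∀ x, Measurable (fun t => G' t x) := by
    intro x
    exact Measurable.ite hNmeas measurable_const (hGmeas x)
  set c₀ : ℝ := C * ‖u₀‖ ^ (q/p) + L * r with hc₀def
  have hc₀0 : 0 ≤ c₀ := by
    have : (0:ℝ) ≤ ‖u₀‖ ^ (q/p) := Real.rpow_nonneg (norm_nonneg _) _
    positivity
  set g : ℝ → ℝ := fun s => ‖γ s‖ + c₀ with hgdef
  have hg0 : ∀ s, 0 ≤ g s := fun s => by positivity
  have hG'bound : ∀ t, ∀ x ∈ Metric.closedBall u₀ r, ‖G' t x‖ ≤ g t := by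
    intro t x hx
    by_cases ht : t ∈ N
    · simp only [hG'def, if_pos ht, norm_zero]; exact hg0 t
    · simp only [hG'def, if_neg ht]
      obtain ⟨-, h1, h2⟩ := hNgood t ht
      have h3 := h2 x hx u₀ (Metric.mem_closedBall_self hr.le)
      have h4 : ‖x - u₀‖ ≤ r := by
        rw [← dist_eq_norm]; exact hx
      have h5 : ‖G t x‖ - ‖G t u₀‖ ≤ ‖G t x - G t u₀‖ := norm_sub_norm_le _ _
      have h6 : L * ‖x - u₀‖ ≤ L * r := mul_le_mul_of_nonneg_left h4 hL
      have h7 : γ t ≤ ‖γ t‖ := le_abs_self _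
      simp only [hgdef, hc₀def]
      linarith
  have hG'lip : ∀ t, ∀ x ∈ Metric.closedBall u₀ r, ∀ y ∈ Metric.closedBall u₀ r,
      ‖G' t x - G' t y‖ ≤ L * ‖x - y‖ := by
    intro t x hx y hy
    by_cases ht : t ∈ N
    · simp only [hG'def, if_pos ht, sub_zero, norm_zero]; positivity
    · simp only [hG'def, if_neg ht]
      exact (hNgood t ht).2.2 x hx y hy
  -- the L^p data
  have hgmem : MemLp g (ENNReal.ofReal p) (volume.restrict (Icc 0 T)) :=
    hγ.norm.add (memLp_const c₀)
  have hgPint : Integrable (fun s => ‖g s‖ ^ p) (volume.restrict (Icc 0 T)) := by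
    have h := hgmem.integrable_norm_rpow (by simp [hp0, hp0.not_ge]) ENNReal.ofReal_ne_top
    simpa [ENNReal.toReal_ofReal hp0.le] using h
  set Mg : ℝ := (∫ s in Icc (0:ℝ) T, ‖g s‖ ^ p) ^ (1/p) with hMgdef
  have hMg0 : 0 ≤ Mg :=
    Real.rpow_nonneg (integral_nonneg fun s => by positivity) _
  -- central estimate
  have main_est : ∀ (ψ : ℝ → EuclideanSpace ℝ (Fin m)), Measurable ψ →
      (∀ s, ψ s ∈ Metric.closedBall u₀ r) → ∀ a b t : ℝ, 0 ≤ a → a ≤ b → b ≤ t → t ≤ T →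
      IntervalIntegrable (fun s => (t - s)^(α-1) • G' s (ψ s)) volume a b ∧
      ‖∫ s in a..b, (t - s)^(α-1) • G' s (ψ s)‖ ≤ ((b-a)^β / β) ^ (1/p') * Mg := by
    intro ψ hψm hψb a b t h0a hab hbt htT
    have hsub : Ioc a b ⊆ Icc 0 T := fun s hs => ⟨by linarith [hs.1], by linarith [hs.2]⟩
    have hle : volume.restrict (Ioc a b) ≤ volume.restrict (Icc 0 T) :=
      Measure.restrict_mono hsub le_rfl
    have hgmem' : MemLp g (ENNReal.ofReal p) (volume.restrict (Ioc a b)) :=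
      hgmem.mono_measure hle
    obtain ⟨hkmem, hkint⟩ := my_kernel_facts (p' := p') (αr := α) hp'0 hc hα1.le hab hbt
    have hF : Measurable (fun s => G' s (ψ s)) := my_superposition hG'cont hG'meas hψm
    have hFg : ∀ᵐ s ∂(volume.restrict (Ioc a b)), ‖G' s (ψ s)‖ ≤ g s :=
      Filter.Eventually.of_forall (fun s => hG'bound s _ (hψb s))
    obtain ⟨hint, hbound⟩ := my_holder hpq hkmem hgmem' hF.aestronglyMeasurable hFg
    constructor
    · rw [intervalIntegrable_iff_integrableOn_Ioc_of_le hab]; exact hint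
    · rw [intervalIntegral.integral_of_le hab]
      refine hbound.trans ?_
      have h1 : (∫ s in Ioc a b, ‖(t-s)^(α-1)‖^p') ^ (1/p') ≤ ((b-a)^β/β)^(1/p') :=
        Real.rpow_le_rpow (integral_nonneg fun s => by positivity) hkint (by positivity)
      have h2 : (∫ s in Ioc a b, ‖g s‖^p) ^ (1/p) ≤ Mg := by
        refine Real.rpow_le_rpow (integral_nonneg fun s => by positivity) ?_ (by positivity)
        refine setIntegral_mono_set hgPint ?_ (HasSubset.Subset.eventuallyLE hsub)
        exact Filter.Eventually.of_forall fun s => by positivity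
      exact mul_le_mul h1 h2
        (Real.rpow_nonneg (integral_nonneg fun s => by positivity) _)
        (Real.rpow_nonneg (div_nonneg (Real.rpow_nonneg (by linarith) _) hβ0.le) _)
  -- Lipschitz estimate
  have lip_est : ∀ ψ₁ ψ₂ : ℝ → EuclideanSpace ℝ (Fin m), Measurable ψ₁ → Measurable ψ₂ →
      (∀ s, ψ₁ s ∈ Metric.closedBall u₀ r) → (∀ s, ψ₂ s ∈ Metric.closedBall u₀ r) →
      ∀ D t : ℝ, 0 ≤ D → (∀ s, ‖ψ₁ s - ψ₂ s‖ ≤ D) → 0 ≤ t → t ≤ T →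
      ‖(∫ s in (0:ℝ)..t, (t-s)^(α-1) • G' s (ψ₁ s)) -
        ∫ s in (0:ℝ)..t, (t-s)^(α-1) • G' s (ψ₂ s)‖ ≤ L * D * (t^α / α) := by
    intro ψ₁ ψ₂ h1m h2m h1b h2b D t hD hDle h0t htT
    have hi1 := (main_est ψ₁ h1m h1b 0 t t le_rfl h0t le_rfl htT).1
    have hi2 := (main_est ψ₂ h2m h2b 0 t t le_rfl h0t le_rfl htT).1
    rw [← intervalIntegral.integral_sub hi1 hi2]
    have hkint : IntervalIntegrable (fun s => (t-s)^(α-1) * (L*D)) volume 0 t :=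
      (my_intervalIntegrable_kernel hαm1).mul_const _
    have hb : ∀ s ∈ Set.uIoc (0:ℝ) t,
        ‖(t-s)^(α-1) • G' s (ψ₁ s) - (t-s)^(α-1) • G' s (ψ₂ s)‖ ≤ (t-s)^(α-1) * (L*D) := by
      intro s hs
      rw [uIoc_of_le h0t] at hs
      have hts : (0:ℝ) ≤ t - s := by linarith [hs.2]
      rw [← smul_sub, norm_smul, Real.norm_eq_abs,
        abs_of_nonneg (Real.rpow_nonneg hts _)]
      refine mul_le_mul_of_nonneg_left ?_ (Real.rpow_nonneg hts _)
      calc ‖G' s (ψ₁ s) - G' s (ψ₂ s)‖ ≤ L * ‖ψ₁ s - ψ₂ s‖ :=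
            hG'lip s _ (h1b s) _ (h2b s)
        _ ≤ L * D := mul_le_mul_of_nonneg_left (hDle s) hL
    have hval : (∫ s in (0:ℝ)..t, (t-s)^(α-1) * (L*D)) = L * D * (t^α/α) := by
      rw [intervalIntegral.integral_mul_const, my_integral_kernel hαm1]
      have h2 : (t - t) ^ (α - 1 + 1) = 0 := by
        rw [sub_self]; exact Real.zero_rpow (by linarith)
      rw [sub_zero, h2, sub_zero]
      have : α - 1 + 1 = α := by ring
      rw [this]; ring
    have h6 : (0:ℝ) ≤ t ^ α := Real.rpow_nonneg h0t _
    calc ‖∫ s in (0:ℝ)..t, ((t-s)^(α-1) • G' s (ψ₁ s) - (t-s)^(α-1) • G' s (ψ₂ s))‖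
        ≤ |∫ s in (0:ℝ)..t, (t-s)^(α-1) * (L*D)| :=
          intervalIntegral.norm_integral_le_abs_of_norm_le
            ((ae_restrict_iff' measurableSet_uIoc).mpr (Filter.Eventually.of_forall hb)) hkint
      _ = L * D * (t^α/α) := by
          rw [hval, abs_of_nonneg (mul_nonneg (mul_nonneg hL hD) (div_nonneg h6 hα0.le))]
  -- continuity modulus estimate
  have cont_est : ∀ ψ : ℝ → EuclideanSpace ℝ (Fin m), Measurable ψ →
      (∀ s, ψ s ∈ Metric.closedBall u₀ r) → ∀ t t' : ℝ, 0 ≤ t → t ≤ t' → t' ≤ T →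
      ‖(∫ s in (0:ℝ)..t', (t'-s)^(α-1) • G' s (ψ s)) -
        (∫ s in (0:ℝ)..t, (t-s)^(α-1) • G' s (ψ s))‖
        ≤ 2 * (((t'-t)^β/β)^(1/p') * Mg) := by
    intro ψ hm hb t t' h0t htt' ht'T
    have hi1 := (main_est ψ hm hb 0 t t' le_rfl h0t htt' ht'T).1
    have hi2 := main_est ψ hm hb t t' t' h0t htt' le_rfl ht'T
    have hi3 := (main_est ψ hm hb 0 t t le_rfl h0t le_rfl (le_trans htt' ht'T)).1
    have hsplit : (∫ s in (0:ℝ)..t', (t'-s)^(α-1) • G' s (ψ s))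
        = (∫ s in (0:ℝ)..t, (t'-s)^(α-1) • G' s (ψ s)) +
          ∫ s in t..t', (t'-s)^(α-1) • G' s (ψ s) :=
      (intervalIntegral.integral_add_adjacent_intervals hi1 hi2.1).symm
    have hsub2 : (∫ s in (0:ℝ)..t, (t'-s)^(α-1) • G' s (ψ s)) -
        (∫ s in (0:ℝ)..t, (t-s)^(α-1) • G' s (ψ s))
        = ∫ s in (0:ℝ)..t, ((t'-s)^(α-1) - (t-s)^(α-1)) • G' s (ψ s) := by
      rw [← intervalIntegral.integral_sub hi1 hi3]
      refine intervalIntegral.integral_congr fun s _ => ?_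
      rw [sub_smul]
    -- bound the first difference via Hölder with the difference kernel
    have hW : ‖∫ s in (0:ℝ)..t, ((t'-s)^(α-1) - (t-s)^(α-1)) • G' s (ψ s)‖
        ≤ ((t'-t)^β/β)^(1/p') * Mg := by
      have hsubset : Ioc (0:ℝ) t ⊆ Icc 0 T :=
        fun s hs => ⟨by linarith [hs.1], by linarith [hs.2]⟩
      have hle : volume.restrict (Ioc (0:ℝ) t) ≤ volume.restrict (Icc 0 T) :=
        Measure.restrict_mono hsubset le_rfl
      have hgmem' : MemLp g (ENNReal.ofReal p) (volume.restrict (Ioc (0:ℝ) t)) :=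
        hgmem.mono_measure hle
      have hk1 := (my_kernel_facts (p' := p') (αr := α) (t := t') hp'0 hc hα1.le h0t htt').1
      have hk2 := (my_kernel_facts (p' := p') (αr := α) (t := t) hp'0 hc hα1.le h0t le_rfl).1
      have hkd : MemLp (fun s => (t'-s)^(α-1) - (t-s)^(α-1)) (ENNReal.ofReal p')
          (volume.restrict (Ioc (0:ℝ) t)) := hk1.sub hk2
      have hF : Measurable (fun s => G' s (ψ s)) := my_superposition hG'cont hG'meas hm
      have hFg : ∀ᵐ s ∂(volume.restrict (Ioc (0:ℝ) t)), ‖G' s (ψ s)‖ ≤ g s :=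
        Filter.Eventually.of_forall (fun s => hG'bound s _ (hb s))
      obtain ⟨-, hbound⟩ := my_holder hpq hkd hgmem' hF.aestronglyMeasurable hFg
      rw [intervalIntegral.integral_of_le h0t]
      refine hbound.trans ?_
      have heq : (∫ s in Ioc (0:ℝ) t, ‖(t'-s)^(α-1) - (t-s)^(α-1)‖^p')
          = ∫ s in Ioc (0:ℝ) t, ‖(t-s)^(α-1) - (t'-s)^(α-1)‖^p' := by
        refine setIntegral_congr_fun measurableSet_Ioc fun s _ => ?_
        rw [norm_sub_rev]
      have h1 : (∫ s in Ioc (0:ℝ) t, ‖(t'-s)^(α-1) - (t-s)^(α-1)‖^p') ^ (1/p')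
          ≤ ((t'-t)^β/β)^(1/p') := by
        rw [heq]
        exact Real.rpow_le_rpow (integral_nonneg fun s => by positivity)
          (my_kernel_diff_facts hp'1.le hc hα1.le h0t htt') (by positivity)
      have h2 : (∫ s in Ioc (0:ℝ) t, ‖g s‖^p) ^ (1/p) ≤ Mg := by
        refine Real.rpow_le_rpow (integral_nonneg fun s => by positivity) ?_ (by positivity)
        refine setIntegral_mono_set hgPint ?_ (HasSubset.Subset.eventuallyLE hsubset)
        exact Filter.Eventually.of_forall fun s => by positivity
      exact mul_le_mul h1 h2
        (Real.rpow_nonneg (integral_nonneg fun s => by positivity) _)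
        (Real.rpow_nonneg (div_nonneg (Real.rpow_nonneg (by linarith) _) hβ0.le) _)
    have hY : ‖∫ s in t..t', (t'-s)^(α-1) • G' s (ψ s)‖ ≤ ((t'-t)^β/β)^(1/p') * Mg :=
      hi2.2
    calc ‖(∫ s in (0:ℝ)..t', (t'-s)^(α-1) • G' s (ψ s)) -
          (∫ s in (0:ℝ)..t, (t-s)^(α-1) • G' s (ψ s))‖
        = ‖(∫ s in (0:ℝ)..t, ((t'-s)^(α-1) - (t-s)^(α-1)) • G' s (ψ s)) +
            ∫ s in t..t', (t'-s)^(α-1) • G' s (ψ s)‖ := by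
          rw [hsplit, add_sub_right_comm, hsub2]
      _ ≤ ‖∫ s in (0:ℝ)..t, ((t'-s)^(α-1) - (t-s)^(α-1)) • G' s (ψ s)‖ +
            ‖∫ s in t..t', (t'-s)^(α-1) • G' s (ψ s)‖ := norm_add_le _ _
      _ ≤ 2 * (((t'-t)^β/β)^(1/p') * Mg) := by linarith
  -- choice of τ
  set Fc : ℝ → ℝ := fun x => (Real.Gamma α)⁻¹ * ((x^β/β)^(1/p') * Mg) +
      (Real.Gamma α)⁻¹ * (L * (x^α/α)) with hFcdef
  have hFc0 : Fc 0 = 0 := by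
    simp only [hFcdef, Real.zero_rpow hβ0.ne', Real.zero_rpow hα0.ne', zero_div,
      Real.zero_rpow (by positivity : (1:ℝ)/p' ≠ 0), zero_mul, mul_zero, add_zero]
  have hFccont : ContinuousAt Fc 0 := by
    have h1 : ContinuousAt (fun x:ℝ => x^β) 0 :=
      Real.continuousAt_rpow_const 0 β (Or.inr hβ0.le)
    have h2 : ContinuousAt (fun x:ℝ => x^β/β) 0 := h1.div_const β
    have h3 : ContinuousAt (fun x:ℝ => (x^β/β)^(1/p')) 0 :=
      h2.rpow_const (Or.inr (by positivity))
    have h4 : ContinuousAt (fun x:ℝ => x^α) 0 :=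
      Real.continuousAt_rpow_const 0 α (Or.inr hα0.le)
    exact (continuousAt_const.mul (h3.mul continuousAt_const)).add
      (continuousAt_const.mul (continuousAt_const.mul (h4.div_const α)))
  have hsmall : ∀ᶠ x in nhds 0, Fc x < min (r/2) (1/2) := by
    have h := hFccont.tendsto
    rw [hFc0] at h
    exact h.eventually_lt_const (by positivity)
  obtain ⟨δ, hδ0, hδ⟩ := Metric.eventually_nhds_iff.mp hsmall
  set τ := min (δ/2) (T/2) with hτdef
  have hτ0 : 0 < τ := lt_min (by linarith) (by linarith)
  have hτT : τ < T := lt_of_le_of_lt (min_le_right _ _) (by linarith)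
  have hτsmall : Fc τ < min (r/2) (1/2) := by
    refine hδ ?_
    rw [Real.dist_eq, sub_zero, abs_of_pos hτ0]
    calc τ ≤ δ/2 := min_le_left _ _
      _ < δ := by linarith
  have hterm1 : 0 ≤ (Real.Gamma α)⁻¹ * ((τ^β/β)^(1/p') * Mg) :=
    mul_nonneg hΓi (mul_nonneg (Real.rpow_nonneg
      (div_nonneg (Real.rpow_nonneg hτ0.le _) hβ0.le) _) hMg0)
  have hterm2 : 0 ≤ (Real.Gamma α)⁻¹ * (L * (τ^α/α)) :=
    mul_nonneg hΓi (mul_nonneg hL (div_nonneg (Real.rpow_nonneg hτ0.le _) hα0.le))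
  have hA : (Real.Gamma α)⁻¹ * ((τ^β/β)^(1/p') * Mg) ≤ r/2 := by
    have := min_le_left (r/2) (1/2)
    have hFcτ : (Real.Gamma α)⁻¹ * ((τ^β/β)^(1/p') * Mg) ≤ Fc τ := by
      simp only [hFcdef]; linarith
    linarith [hτsmall]
  have hB : (Real.Gamma α)⁻¹ * (L * (τ^α/α)) ≤ 1/2 := by
    have := min_le_right (r/2) (1/2)
    have hFcτ : (Real.Gamma α)⁻¹ * (L * (τ^α/α)) ≤ Fc τ := by
      simp only [hFcdef]; linarith
    linarith [hτsmall]
  -- monotone versions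
  have hAt : ∀ t : ℝ, 0 ≤ t → t ≤ τ → (Real.Gamma α)⁻¹ * ((t^β/β)^(1/p') * Mg) ≤ r/2 := by
    intro t ht htτ
    refine le_trans ?_ hA
    refine mul_le_mul_of_nonneg_left (mul_le_mul_of_nonneg_right ?_ hMg0) hΓi
    refine Real.rpow_le_rpow (div_nonneg (Real.rpow_nonneg ht _) hβ0.le) ?_ (by positivity)
    exact (div_le_div_iff_of_pos_right hβ0).mpr (Real.rpow_le_rpow ht htτ hβ0.le)
  have hBt : ∀ t : ℝ, 0 ≤ t → t ≤ τ → (Real.Gamma α)⁻¹ * (L * (t^α/α)) ≤ 1/2 := by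
    intro t ht htτ
    refine le_trans ?_ hB
    refine mul_le_mul_of_nonneg_left (mul_le_mul_of_nonneg_left ?_ hL) hΓi
    exact (div_le_div_iff_of_pos_right hα0).mpr (Real.rpow_le_rpow ht htτ hα0.le)
  -- the complete metric space of ball-valued continuous maps on [0, τ]
  let K := {f : C(Icc (0:ℝ) τ, EuclideanSpace ℝ (Fin m)) //
    ∀ x, f x ∈ Metric.closedBall u₀ r}
  haveI hKcomplete : CompleteSpace K := by
    have hcl : IsClosed {f : C(Icc (0:ℝ) τ, EuclideanSpace ℝ (Fin m)) |
        ∀ x, f x ∈ Metric.closedBall u₀ r} := by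
      have heq : {f : C(Icc (0:ℝ) τ, EuclideanSpace ℝ (Fin m)) |
          ∀ x, f x ∈ Metric.closedBall u₀ r}
          = ⋂ (x : Icc (0:ℝ) τ),
            (fun f : C(Icc (0:ℝ) τ, EuclideanSpace ℝ (Fin m)) => f x) ⁻¹'
              (Metric.closedBall u₀ r) := by
        ext f; simp [Set.mem_iInter]
      rw [heq]
      exact isClosed_iInter fun x =>
        Metric.isClosed_closedBall.preimage (continuous_eval_const x)
    exact hcl.completeSpace_coe
  haveI hKne : Nonempty K :=
    ⟨⟨ContinuousMap.const _ u₀, fun x => Metric.mem_closedBall_self hr.le⟩⟩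
  -- the Picard map
  have key : ∀ f : K, ∃ Φf : K, ∀ x : Icc (0:ℝ) τ,
      Φf.1 x = u₀ + (Real.Gamma α)⁻¹ •
        ∫ s in (0:ℝ)..(x:ℝ), ((x:ℝ) - s)^(α-1) • G' s (f.1 (projIcc 0 τ hτ0.le s)) := by
    intro f
    set ψ : ℝ → EuclideanSpace ℝ (Fin m) := fun s => f.1 (projIcc 0 τ hτ0.le s) with hψdef
    have hψm : Measurable ψ := ((map_continuous f.1).comp continuous_projIcc).measurable
    have hψb : ∀ s, ψ s ∈ Metric.closedBall u₀ r := fun s => f.2 _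
    set raw : ℝ → EuclideanSpace ℝ (Fin m) := fun t =>
      u₀ + (Real.Gamma α)⁻¹ • ∫ s in (0:ℝ)..t, (t - s)^(α-1) • G' s (ψ s) with hrawdef
    have hrawcont : ContinuousOn raw (Icc 0 τ) := by
      refine my_continuousOn_of_rpow_mod (c := (Real.Gamma α)⁻¹ * 2 * Mg / β^(1/p'))
        (e := β * (1/p')) (by positivity) ?_
      intro x hx y hy hxy
      have h1 : dist (raw x) (raw y) = (Real.Gamma α)⁻¹ *
          ‖(∫ s in (0:ℝ)..y, (y - s)^(α-1) • G' s (ψ s)) -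
            ∫ s in (0:ℝ)..x, (x - s)^(α-1) • G' s (ψ s)‖ := by
        simp only [hrawdef]
        rw [dist_eq_norm, add_sub_add_left_eq_sub, ← smul_sub, norm_smul, Real.norm_eq_abs,
          abs_of_nonneg hΓi, norm_sub_rev]
      rw [h1]
      have h2 := cont_est ψ hψm hψb x y hx.1 hxy (le_trans hy.2 hτT.le)
      have h3 : ((y-x)^β/β)^(1/p') = (y-x)^(β*(1/p')) / β^(1/p') := by
        rw [Real.div_rpow (Real.rpow_nonneg (by linarith : (0:ℝ) ≤ y - x) _) hβ0.le,
          ← Real.rpow_mul (by linarith : (0:ℝ) ≤ y - x)]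
      have h4 := mul_le_mul_of_nonneg_left h2 hΓi
      rw [h3] at h4
      refine h4.trans (le_of_eq ?_)
      ring
    have hrawball : ∀ x : Icc (0:ℝ) τ, raw x ∈ Metric.closedBall u₀ r := by
      intro x
      have h0x : (0:ℝ) ≤ x := x.2.1
      have hxτ : (x:ℝ) ≤ τ := x.2.2
      have hest := (main_est ψ hψm hψb 0 x x le_rfl h0x le_rfl
        (by linarith [hτT.le])).2
      rw [Metric.mem_closedBall, dist_eq_norm]
      have h1 : raw x - u₀ = (Real.Gamma α)⁻¹ •
          ∫ s in (0:ℝ)..(x:ℝ), ((x:ℝ) - s)^(α-1) • G' s (ψ s) := by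
        simp only [hrawdef]; rw [add_sub_cancel_left]
      rw [h1, norm_smul, Real.norm_eq_abs, abs_of_nonneg hΓi]
      have h2 := mul_le_mul_of_nonneg_left hest hΓi
      rw [sub_zero] at h2
      linarith [hAt (x:ℝ) h0x hxτ]
    exact ⟨⟨⟨(Icc (0:ℝ) τ).restrict raw, hrawcont.restrict⟩, hrawball⟩, fun x => rfl⟩
  choose Φ hΦ using key
  -- contraction property
  have hlipΦ : ∀ f h : K, dist (Φ f) (Φ h) ≤ (1/2 : ℝ) * dist f h := by
    intro f h
    rw [Subtype.dist_eq, ContinuousMap.dist_le (by positivity)]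
    intro x
    rw [show ((Φ f).1 : C(Icc (0:ℝ) τ, EuclideanSpace ℝ (Fin m))) = (Φ f).1 from rfl]
    rw [hΦ f x, hΦ h x]
    have hD0 : (0:ℝ) ≤ dist f h := dist_nonneg
    have hDle : ∀ s : ℝ, ‖f.1 (projIcc 0 τ hτ0.le s) - h.1 (projIcc 0 τ hτ0.le s)‖
        ≤ dist f h := by
      intro s
      rw [← dist_eq_norm]
      calc dist (f.1 (projIcc 0 τ hτ0.le s)) (h.1 (projIcc 0 τ hτ0.le s))
          ≤ dist f.1 h.1 := ContinuousMap.dist_apply_le_dist _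
        _ = dist f h := (Subtype.dist_eq f h).symm
    have hfm : Measurable (fun s : ℝ => f.1 (projIcc 0 τ hτ0.le s)) :=
      ((map_continuous f.1).comp continuous_projIcc).measurable
    have hhm : Measurable (fun s : ℝ => h.1 (projIcc 0 τ hτ0.le s)) :=
      ((map_continuous h.1).comp continuous_projIcc).measurable
    have hest := lip_est _ _ hfm hhm (fun s => f.2 _) (fun s => h.2 _) (dist f h) (x:ℝ)
      hD0 hDle x.2.1 (le_trans x.2.2 hτT.le)
    rw [dist_eq_norm, add_sub_add_left_eq_sub, ← smul_sub, norm_smul, Real.norm_eq_abs,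
      abs_of_nonneg hΓi]
    have h5 := mul_le_mul_of_nonneg_left hest hΓi
    have h6 : (Real.Gamma α)⁻¹ * (L * dist f h * ((x:ℝ)^α/α))
        = dist f h * ((Real.Gamma α)⁻¹ * (L * ((x:ℝ)^α/α))) := by ring
    have h7 := hBt (x:ℝ) x.2.1 x.2.2
    have h8 : dist f h * ((Real.Gamma α)⁻¹ * (L * ((x:ℝ)^α/α))) ≤ dist f h * (1/2) :=
      mul_le_mul_of_nonneg_left h7 hD0
    linarith
  have hcontr : ContractingWith (1/2 : ℝ≥0) Φ := by
    constructor
    · have hhalf : (1/2 : ℝ≥0) < 1 := NNReal.half_lt_self one_ne_zero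
      simpa using hhalf
    · refine LipschitzWith.of_dist_le_mul fun f h => ?_
      have h9 := hlipΦ f h
      rwa [show ((1/2 : ℝ≥0) : ℝ) = 1/2 by norm_num]
  -- relating G and G' in the integral equation
  have hNvol : volume (N ∩ Icc 0 T) = 0 := by
    have h10 := hNnull
    rwa [Measure.restrict_apply hNmeas] at h10
  have intcongr : ∀ (φ₀ : ℝ → EuclideanSpace ℝ (Fin m)) (t : ℝ), 0 ≤ t → t ≤ τ →
      (∫ s in (0:ℝ)..t, (t-s)^(α-1) • G' s (φ₀ s)) =
      ∫ s in (0:ℝ)..t, (t-s)^(α-1) • G s (φ₀ s) := by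
    intro φ₀ t h0t htτ
    refine intervalIntegral.integral_congr_ae ?_
    have hae2 : ∀ᵐ s ∂(volume : Measure ℝ), s ∉ N ∩ Icc 0 T :=
      measure_eq_zero_iff_ae_notMem.mp hNvol
    filter_upwards [hae2] with s hs hsmem
    rw [uIoc_of_le h0t] at hsmem
    have hsN : s ∉ N := fun hn => hs ⟨hn, ⟨hsmem.1.le, by linarith [hsmem.2, hτT.le]⟩⟩
    have h11 : G' s (φ₀ s) = G s (φ₀ s) := by
      simp only [hG'def]
      rw [if_neg hsN]
    rw [h11]
  -- existence
  set φK : K := ContractingWith.fixedPoint Φ hcontr with hφKdef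
  have hfix : Φ φK = φK := hcontr.fixedPoint_isFixedPt
  refine ⟨τ, hτ0, hτT, ?_, ?_⟩
  · refine ⟨fun t => φK.1 (projIcc 0 τ hτ0.le t), ?_, ?_⟩
    · exact ((map_continuous φK.1).comp continuous_projIcc).continuousOn
    · intro t ht
      beta_reduce
      have h1 : φK.1 (projIcc 0 τ hτ0.le t) = (Φ φK).1 ⟨t, ht⟩ := by
        rw [hfix, projIcc_of_mem hτ0.le ht]
      rw [h1, hΦ φK ⟨t, ht⟩]
      have h2 := intcongr (fun s => φK.1 (projIcc 0 τ hτ0.le s)) t ht.1 ht.2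
      rw [show ((⟨t, ht⟩ : Icc (0:ℝ) τ) : ℝ) = t from rfl, h2]
  -- uniqueness
  · intro φ₁ φ₂ h1 h2
    obtain ⟨h1c, h1e⟩ := h1
    obtain ⟨h2c, h2e⟩ := h2
    have conv : ∀ φ₀ : ℝ → EuclideanSpace ℝ (Fin m),
        (∀ t ∈ Icc (0:ℝ) τ, φ₀ t = u₀ + (Real.Gamma α)⁻¹ •
          ∫ s in (0:ℝ)..t, (t-s)^(α-1) • G s (φ₀ s)) →
        ∀ t ∈ Icc (0:ℝ) τ, φ₀ t = u₀ + (Real.Gamma α)⁻¹ •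
          ∫ s in (0:ℝ)..t, (t-s)^(α-1) • G' s (φ₀ s) := by
      intro φ₀ he t ht
      rw [he t ht, intcongr φ₀ t ht.1 ht.2]
    have h1e' := conv φ₁ h1e
    have h2e' := conv φ₂ h2e
    have step : ∀ (φ₀ : ℝ → EuclideanSpace ℝ (Fin m)), ContinuousOn φ₀ (Icc 0 τ) →
        (∀ t ∈ Icc (0:ℝ) τ, φ₀ t = u₀ + (Real.Gamma α)⁻¹ •
          ∫ s in (0:ℝ)..t, (t-s)^(α-1) • G' s (φ₀ s)) →
        ∀ x ∈ Icc (0:ℝ) τ, (∀ u ∈ Icc (0:ℝ) x, φ₀ u ∈ Metric.closedBall u₀ r) →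
        ∀ u ∈ Icc (0:ℝ) x, dist (φ₀ u) u₀ ≤ r/2 := by
      intro φ₀ hc0 he0 x hx hball u hu
      have h0u : (0:ℝ) ≤ u := hu.1
      have huτ : u ≤ τ := le_trans hu.2 hx.2
      set χ : ℝ → EuclideanSpace ℝ (Fin m) := fun s => φ₀ (projIcc 0 u h0u s) with hχdef
      have hχc : Continuous χ := by
        have := (hc0.mono (Icc_subset_Icc le_rfl huτ)).comp_continuous
          (continuous_subtype_val.comp continuous_projIcc)
          (fun s => (projIcc 0 u h0u s).2)
        exact this
      have hχb : ∀ s, χ s ∈ Metric.closedBall u₀ r := by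
        intro s
        refine hball _ ?_
        have h := (projIcc 0 u h0u s).2
        exact ⟨h.1, le_trans h.2 hu.2⟩
      have hest := (main_est χ hχc.measurable hχb 0 u u le_rfl h0u le_rfl
        (by linarith [hτT.le])).2
      have heq : (∫ s in (0:ℝ)..u, (u-s)^(α-1) • G' s (φ₀ s)) =
          ∫ s in (0:ℝ)..u, (u-s)^(α-1) • G' s (χ s) := by
        refine intervalIntegral.integral_congr fun s hs => ?_
        rw [uIcc_of_le h0u] at hs
        simp only [hχdef]
        rw [projIcc_of_mem h0u hs]
      rw [dist_eq_norm]
      have h1 : φ₀ u - u₀ = (Real.Gamma α)⁻¹ •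
          ∫ s in (0:ℝ)..u, (u-s)^(α-1) • G' s (χ s) := by
        rw [he0 u ⟨h0u, huτ⟩, add_sub_cancel_left, heq]
      rw [h1, norm_smul, Real.norm_eq_abs, abs_of_nonneg hΓi]
      have h3 := mul_le_mul_of_nonneg_left hest hΓi
      rw [sub_zero] at h3
      linarith [hAt u h0u huτ]
    have ballall : ∀ (φ₀ : ℝ → EuclideanSpace ℝ (Fin m)), ContinuousOn φ₀ (Icc 0 τ) →
        (∀ t ∈ Icc (0:ℝ) τ, φ₀ t = u₀ + (Real.Gamma α)⁻¹ •
          ∫ s in (0:ℝ)..t, (t-s)^(α-1) • G' s (φ₀ s)) →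
        ∀ t ∈ Icc (0:ℝ) τ, φ₀ t ∈ Metric.closedBall u₀ r := by
      intro φ₀ hc0 he0
      have hzero : φ₀ 0 = u₀ := by
        have h12 := he0 0 ⟨le_rfl, hτ0.le⟩
        simpa using h12
      have hmain : Icc (0:ℝ) τ ⊆
          {t : ℝ | ∀ u ∈ Icc (0:ℝ) t, φ₀ u ∈ Metric.closedBall u₀ r} := by
        refine IsClosed.Icc_subset_of_forall_mem_nhdsWithin ?_ ?_ ?_
        · refine IsSeqClosed.isClosed ?_
          intro xn x hxn hlim
          have hxIcc : x ∈ Icc (0:ℝ) τ :=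
            isClosed_Icc.isSeqClosed (fun n => (hxn n).2) hlim
          refine ⟨?_, hxIcc⟩
          intro u hu
          rcases lt_or_eq_of_le hu.2 with hlt | heq2
          · obtain ⟨n, hn⟩ := (hlim.eventually_const_lt hlt).exists
            exact (hxn n).1 u ⟨hu.1, hn.le⟩
          · have htends : Filter.Tendsto (fun n => φ₀ (xn n)) Filter.atTop (𝓝 (φ₀ x)) := by
              refine (hc0 x hxIcc).tendsto.comp ?_
              refine tendsto_nhdsWithin_of_tendsto_nhds_of_eventually_within _ hlim ?_
              exact Filter.Eventually.of_forall fun n => (hxn n).2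
            have hdist : Filter.Tendsto (fun n => dist (φ₀ (xn n)) u₀) Filter.atTop
                (𝓝 (dist (φ₀ x) u₀)) := htends.dist tendsto_const_nhds
            have hle : ∀ n, dist (φ₀ (xn n)) u₀ ≤ r := fun n =>
              (hxn n).1 (xn n) ⟨(hxn n).2.1, le_rfl⟩
            rw [heq2, Metric.mem_closedBall]
            exact le_of_tendsto hdist (Filter.Eventually.of_forall hle)
        · intro u hu
          have h13 : u = 0 := le_antisymm hu.2 hu.1
          rw [h13, hzero]
          exact Metric.mem_closedBall_self hr.le
        · rintro x ⟨hxS, hx0, hxτ⟩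
          have hhalf := step φ₀ hc0 he0 x ⟨hx0, hxτ.le⟩ hxS
          have hev : φ₀ ⁻¹' Metric.ball (φ₀ x) (r/2) ∈ nhdsWithin x (Icc (0:ℝ) τ) :=
            (hc0 x ⟨hx0, hxτ.le⟩) (Metric.ball_mem_nhds _ (by linarith))
          obtain ⟨ε, hε0, hεsub⟩ := Metric.mem_nhdsWithin_iff.mp hev
          refine Filter.mem_of_superset (Ioo_mem_nhdsGT_of_mem
            (⟨le_rfl, lt_min (by linarith) hxτ⟩ : x ∈ Ico x (min (x+ε) τ))) ?_
          intro t' ht' u hu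
          have ht'2 : t' < x + ε := lt_of_lt_of_le ht'.2 (min_le_left _ _)
          have ht'3 : t' ≤ τ := le_of_lt (lt_of_lt_of_le ht'.2 (min_le_right _ _))
          rcases le_or_gt u x with hle2 | hlt2
          · exact Metric.mem_closedBall.mpr (le_trans (hhalf u ⟨hu.1, hle2⟩) (by linarith))
          · have hu1 : u ∈ Metric.ball x ε ∩ Icc (0:ℝ) τ := by
              constructor
              · rw [Metric.mem_ball, Real.dist_eq, abs_of_pos (by linarith)]
                linarith [hu.2]
              · exact ⟨hu.1, by linarith [hu.2]⟩
            have h6 := hεsub hu1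
            rw [mem_preimage, Metric.mem_ball] at h6
            have h7 := hhalf x ⟨hx0, le_rfl⟩
            rw [Metric.mem_closedBall]
            calc dist (φ₀ u) u₀ ≤ dist (φ₀ u) (φ₀ x) + dist (φ₀ x) u₀ := dist_triangle _ _ _
              _ ≤ r := by linarith
      intro t ht
      exact hmain ht t ⟨ht.1, le_rfl⟩
    have mkfix : ∀ (φ₀ : ℝ → EuclideanSpace ℝ (Fin m)), ContinuousOn φ₀ (Icc 0 τ) →
        (∀ t ∈ Icc (0:ℝ) τ, φ₀ t = u₀ + (Real.Gamma α)⁻¹ •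
          ∫ s in (0:ℝ)..t, (t-s)^(α-1) • G' s (φ₀ s)) →
        (∀ t ∈ Icc (0:ℝ) τ, φ₀ t ∈ Metric.closedBall u₀ r) →
        ∃ kf : K, Function.IsFixedPt Φ kf ∧ ∀ t : Icc (0:ℝ) τ, kf.1 t = φ₀ t := by
      intro φ₀ hc0 he0 hb0
      refine ⟨⟨⟨(Icc (0:ℝ) τ).restrict φ₀, hc0.restrict.congr fun _ => rfl⟩, fun x => hb0 x x.2⟩, ?_, fun t => rfl⟩
      refine Subtype.ext (ContinuousMap.ext fun x => ?_)
      rw [hΦ _ x]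
      simp only [ContinuousMap.coe_mk, Set.restrict_apply, Set.restrict, Set.domRestrict_apply]
      have heq2 : (∫ s in (0:ℝ)..(x:ℝ), ((x:ℝ)-s)^(α-1) •
          G' s (φ₀ (projIcc 0 τ hτ0.le s))) =
          ∫ s in (0:ℝ)..(x:ℝ), ((x:ℝ)-s)^(α-1) • G' s (φ₀ s) := by
        refine intervalIntegral.integral_congr fun s hs => ?_
        rw [uIcc_of_le x.2.1] at hs
        rw [projIcc_of_mem hτ0.le ⟨hs.1, le_trans hs.2 x.2.2⟩]
      rw [heq2, ← he0 (x:ℝ) x.2]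
    obtain ⟨kf1, hfix1, hval1⟩ := mkfix φ₁ h1c h1e' (ballall φ₁ h1c h1e')
    obtain ⟨kf2, hfix2, hval2⟩ := mkfix φ₂ h2c h2e' (ballall φ₂ h2c h2e')
    have hkeq : kf1 = kf2 := hcontr.fixedPoint_unique' hfix1 hfix2
    intro t ht
    have h14 := hval1 ⟨t, ht⟩
    rw [hkeq] at h14
    rw [← h14, hval2 ⟨t, ht⟩]
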